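/- For every budget K ∈ ℕ there exists an upgrade set S that is optimal for budget K and is sorted in the following sense: for every two distinct nodes v_i and v_j with parent⁻¹(v_i) = {e_i} and parent⁻¹(v_j) = {e_j} for edges e_i ≠ e_j, such that for every index k one has e_i ∈ P_k if and only if e_j ∈ P_k, and such that Δw(e_i) < Δw(e_j), if v_i ∈ S then v_j ∈ S. (In particular, on each chain the upgraded degree-two nodes may be assumed to be those whose adjacent edges have the largest deviations.) -/

import Mathlib

/-- The shortest root-leaf distance of a node-upgrade instance after upgrading
the node set `S`. -/
noncomputable def sval {V E : Type*} [DecidableEq V] {l : ℕ}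
    (parent : E → V) (w u : E → ℝ) (P : Fin l → Finset E) (hl : 0 < l)
    (S : Finset V) : ℝ :=
  Finset.univ.inf' (Finset.univ_nonempty_iff.mpr ⟨⟨0, hl⟩⟩)
    fun k => ∑ e ∈ P k, if parent e ∈ S then u e else w e

theorem stmt2 {V E : Type*} [Fintype V] [DecidableEq V] [Fintype E] [DecidableEq E]
    (parent : E → V) (w u : E → ℝ) (hwu : ∀ e, w e ≤ u e)
    {l : ℕ} (hl : 0 < l) (P : Fin l → Finset E) (K : ℕ) :
    ∃ S : Finset V,
      -- `S` is optimal for budget `K`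
      (S.card ≤ K ∧ ∀ S' : Finset V, S'.card ≤ K →
        sval parent w u P hl S' ≤ sval parent w u P hl S) ∧
      -- `S` is sorted: on any pair of degree-two nodes lying on exactly the
      -- same root-leaf paths, whose adjacent edges have strictly comparable
      -- deviations, the node with the larger deviation is preferred.
      (∀ (vi vj : V) (ei ej : E), vi ≠ vj → ei ≠ ej →
        (∀ e, parent e = vi ↔ e = ei) →
        (∀ e, parent e = vj ↔ e = ej) →
        (∀ k : Fin l, ei ∈ P k ↔ ej ∈ P k) →
        u ei - w ei < u ej - w ej →
        vi ∈ S → vj ∈ S) := by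
  classical
  set f : Finset V → ℝ := sval parent w u P hl with hf
  set g : Finset V → ℝ :=
    fun S => ∑ v ∈ S, ∑ e ∈ Finset.univ.filter (fun e => parent e = v), (u e - w e) with hg
  -- set of feasible upgrade sets
  set T : Finset (Finset V) := Finset.univ.filter (fun S => S.card ≤ K) with hT
  have hTmem : ∀ S : Finset V, S ∈ T ↔ S.card ≤ K := by
    intro S; simp [hT]
  have hTne : T.Nonempty := ⟨∅, by simp [hT]⟩
  obtain ⟨S₀, hS₀T, hS₀max⟩ := T.exists_max_image f hTne
  set T' : Finset (Finset V) := T.filter (fun S => f S = f S₀) with hT'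
  have hT'ne : T'.Nonempty := ⟨S₀, by simp [hT', hS₀T]⟩
  obtain ⟨S, hST', hSmax⟩ := T'.exists_max_image g hT'ne
  have hST : S ∈ T := (Finset.mem_filter.mp hST').1
  have hSf : f S = f S₀ := by
    have := (Finset.mem_filter.mp hST').2
    simpa using this
  refine ⟨S, ⟨(hTmem S).mp hST, ?_⟩, ?_⟩
  · intro S' hS'
    have := hS₀max S' ((hTmem S').mpr hS')
    rw [← hSf] at this
    exact this
  · intro vi vj ei ej hvij heij hvi hvj hP hΔ hviS
    by_contra hvjS
    have hpei : parent ei = vi := (hvi ei).mpr rfl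
    have hpej : parent ej = vj := (hvj ej).mpr rfl
    set S' : Finset V := insert vj (S.erase vi) with hS'
    have hviS' : vi ∉ S' := by
      simp only [hS', Finset.mem_insert, Finset.mem_erase]
      push_neg
      exact ⟨hvij, fun h => absurd rfl h⟩
    have hvjS' : vj ∈ S' := Finset.mem_insert_self _ _
    have hother : ∀ x : V, x ≠ vi → x ≠ vj → (x ∈ S' ↔ x ∈ S) := by
      intro x hxi hxj
      simp [hS', Finset.mem_insert, Finset.mem_erase, hxi, hxj]
    have hcard : S'.card ≤ S.card := by
      have h1 : S'.card ≤ (S.erase vi).card + 1 := Finset.card_insert_le _ _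
      have h2 : (S.erase vi).card + 1 = S.card := by
        rw [Finset.card_erase_of_mem hviS]
        exact Nat.succ_pred_eq_of_pos (Finset.card_pos.mpr ⟨vi, hviS⟩)
      omega
    have hS'T : S' ∈ T := (hTmem S').mpr (le_trans hcard ((hTmem S).mp hST))
    -- sval does not decrease
    have hsums : ∀ k : Fin l,
        (∑ e ∈ P k, if parent e ∈ S then u e else w e)
        ≤ ∑ e ∈ P k, if parent e ∈ S' then u e else w e := by
      intro k
      set F : E → ℝ := fun e => if parent e ∈ S then u e else w e with hF
      set F' : E → ℝ := fun e => if parent e ∈ S' then u e else w e with hF'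
      have hFeq : ∀ e, e ≠ ei → e ≠ ej → F' e = F e := by
        intro e hei hej
        have h1 : parent e ≠ vi := fun h => hei ((hvi e).mp h)
        have h2 : parent e ≠ vj := fun h => hej ((hvj e).mp h)
        simp only [hF, hF', hother _ h1 h2]
      have key : ∑ e ∈ P k, (F' e - F e) =
          if ei ∈ P k then (u ej - w ej) - (u ei - w ei) else 0 := by
        by_cases hik : ei ∈ P k
        · have hjk : ej ∈ P k := (hP k).mp hik
          have hjk' : ej ∈ (P k).erase ei := Finset.mem_erase.mpr ⟨Ne.symm heij, hjk⟩
          rw [← Finset.add_sum_erase _ _ hik, ← Finset.add_sum_erase _ _ hjk']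
          have hz : ∑ e ∈ ((P k).erase ei).erase ej, (F' e - F e) = 0 := by
            apply Finset.sum_eq_zero
            intro e he
            have h1 : e ≠ ej := (Finset.mem_erase.mp he).1
            have h2 : e ≠ ei := (Finset.mem_erase.mp (Finset.mem_erase.mp he).2).1
            rw [hFeq e h2 h1]; ring
          rw [hz]
          have hFi : F ei = u ei := by simp [hF, hpei, hviS]
          have hF'i : F' ei = w ei := by simp [hF', hpei, hviS']
          have hFj : F ej = w ej := by simp [hF, hpej, hvjS]
          have hF'j : F' ej = u ej := by simp [hF', hpej, hvjS']
          rw [hFi, hF'i, hFj, hF'j]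
          simp [hik]; ring
        · have hjk : ej ∉ P k := fun h => hik ((hP k).mpr h)
          rw [if_neg hik]
          apply Finset.sum_eq_zero
          intro e he
          rw [hFeq e (fun h => hik (h ▸ he)) (fun h => hjk (h ▸ he))]; ring
      have hdiff : 0 ≤ ∑ e ∈ P k, (F' e - F e) := by
        rw [key]
        split
        · linarith
        · exact le_refl 0
      have hsub : ∑ e ∈ P k, (F' e - F e) = (∑ e ∈ P k, F' e) - ∑ e ∈ P k, F e :=
        Finset.sum_sub_distrib F' F
      rw [hsub] at hdiff
      linarith
    have hfle : f S ≤ f S' := by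
      simp only [hf, sval]
      apply Finset.le_inf'
      intro k _
      exact le_trans (Finset.inf'_le _ (Finset.mem_univ k)) (hsums k)
    have hS'T' : S' ∈ T' := by
      refine Finset.mem_filter.mpr ⟨hS'T, ?_⟩
      have h1 : f S' ≤ f S₀ := hS₀max S' hS'T
      have h2 : f S₀ ≤ f S' := hSf ▸ hfle
      exact le_antisymm h1 h2
    -- g strictly increases, contradiction
    have hφi : (∑ e ∈ Finset.univ.filter (fun e => parent e = vi), (u e - w e))
        = u ei - w ei := by
      have : Finset.univ.filter (fun e => parent e = vi) = {ei} := by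
        ext e; simp [hvi e]
      rw [this, Finset.sum_singleton]
    have hφj : (∑ e ∈ Finset.univ.filter (fun e => parent e = vj), (u e - w e))
        = u ej - w ej := by
      have : Finset.univ.filter (fun e => parent e = vj) = {ej} := by
        ext e; simp [hvj e]
      rw [this, Finset.sum_singleton]
    have hgS' : g S' = g S + (u ej - w ej) - (u ei - w ei) := by
      have hvje : vj ∉ S.erase vi := by
        intro h
        exact hvjS (Finset.mem_of_mem_erase h)
      simp only [hg, hS']
      rw [Finset.sum_insert hvje, Finset.sum_erase_eq_sub hviS, hφi, hφj]
      ring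
    have := hSmax S' hS'T'
    rw [hgS'] at this
    linarith
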